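/- For F ∈ (1, 5/4) and 0 < a < 1, ∫_0^1 (−1 + (1−y)^(4−4F) + (4−4F)y) y^(−5/2) dy = −22/3 + 8F + (4√π Γ(5−4F))/(3 Γ(7/2−4F)), where the improper integral converges at y = 0 (the integrand is O(y^(−1/2))) and at y = 1 (since 4−4F > −1). -/

import Mathlib

open MeasureTheory Real Set Filter intervalIntegral

-- MVT-based quadratic bound
lemma aux_quad_bound {f f' f'' : ℝ → ℝ} {M : ℝ}
    (h1 : ∀ x ∈ Icc (0:ℝ) (1/2), HasDerivAt f (f' x) x)
    (h2 : ∀ x ∈ Icc (0:ℝ) (1/2), HasDerivAt f' (f'' x) x)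
    (hM : ∀ x ∈ Icc (0:ℝ) (1/2), |f'' x| ≤ M)
    (hf0 : f 0 = 0) (hf'0 : f' 0 = 0) :
    ∀ y ∈ Ioc (0:ℝ) (1/2), |f y| ≤ M * y^2 := by
  intro y hy
  obtain ⟨hy0, hy2⟩ := hy
  have hsub : Icc (0:ℝ) y ⊆ Icc (0:ℝ) (1/2) := Icc_subset_Icc le_rfl hy2
  have hcont : ContinuousOn f (Icc 0 y) := fun x hx =>
    ((h1 x (hsub hx)).continuousAt).continuousWithinAt
  obtain ⟨c, hc, hcs⟩ := exists_hasDerivAt_eq_slope f f' hy0 hcont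
    (fun x hx => h1 x (hsub (Ioo_subset_Icc_self hx)))
  have hc2 : c ∈ Icc (0:ℝ) (1/2) := ⟨hc.1.le, hc.2.le.trans hy2⟩
  have hcont' : ContinuousOn f' (Icc 0 c) := fun x hx =>
    ((h2 x (Icc_subset_Icc le_rfl hc2.2 hx)).continuousAt).continuousWithinAt
  obtain ⟨d, hd, hds⟩ := exists_hasDerivAt_eq_slope f' f'' hc.1 hcont'
    (fun x hx => h2 x (Icc_subset_Icc le_rfl hc2.2 (Ioo_subset_Icc_self hx)))
  have hd2 : d ∈ Icc (0:ℝ) (1/2) := ⟨hd.1.le, hd.2.le.trans hc2.2⟩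
  have hM0 : 0 ≤ M := le_trans (abs_nonneg _) (hM d hd2)
  have hfy : f y = f' c * y := by
    field_simp [hf0] at hcs; linarith [hcs]
  have hfc : f' c = f'' d * c := by
    rw [hds, hf'0]; rw [sub_zero, sub_zero, div_mul_cancel₀ _ (ne_of_gt hc.1)]
  rw [hfy, hfc, abs_mul, abs_mul]
  have h1' : |f'' d| ≤ M := hM d hd2
  have : |c| ≤ y := by rw [abs_of_pos hc.1]; exact hc.2.le
  have : |y| = y := abs_of_pos hy0
  calc |f'' d| * |c| * |y| ≤ M * y * y := by
        apply mul_le_mul _ this.le (abs_nonneg y) (by positivity)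
        exact mul_le_mul h1' ‹|c| ≤ y› (abs_nonneg c) hM0
    _ = M * y ^ 2 := by ring

noncomputable def auxphi (s y : ℝ) : ℝ := -1 + (1-y)^s + s*y
noncomputable def auxphi' (s y : ℝ) : ℝ := s - s*(1-y)^(s-1)
noncomputable def auxphi'' (s y : ℝ) : ℝ := s*(s-1)*(1-y)^(s-2)
noncomputable def auxP (s y : ℝ) : ℝ := (1-y)^(s+1) - 1 + (s+1)*y - (s*(s+1)/2)*y^2
noncomputable def auxP' (s y : ℝ) : ℝ := (s+1) - (s+1)*(1-y)^s - s*(s+1)*y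
noncomputable def auxP'' (s y : ℝ) : ℝ := s*(s+1)*(1-y)^(s-1) - s*(s+1)
noncomputable def auxQ (s y : ℝ) : ℝ := (1-y)^(s+1) - 1 + (s+1)*y
noncomputable def auxQ' (s y : ℝ) : ℝ := (s+1) - (s+1)*(1-y)^s
noncomputable def auxQ'' (s y : ℝ) : ℝ := s*(s+1)*(1-y)^(s-1)
noncomputable def auxW (s y : ℝ) : ℝ :=
  -(2/3) * (y^(-(3:ℝ)/2) * auxP s y) - (2*(1-2*s)/3) * (y^(-(1:ℝ)/2) * auxQ s y)
    - (2*(s*(1-s)/2 - (1-4*s^2)/3)) * y^((1:ℝ)/2)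

lemma aux_hasDerivAt_base (p : ℝ) {y : ℝ} (hy : y < 1) :
    HasDerivAt (fun x : ℝ => (1-x)^p) (-(p * (1-y)^(p-1))) y := by
  have hb : (1:ℝ) - y ≠ 0 := by linarith
  have h0 : HasDerivAt (fun x : ℝ => 1 - x) (0 - 1) y :=
    (hasDerivAt_const y (1:ℝ)).sub (hasDerivAt_id y)
  have := HasDerivAt.rpow_const (p := p) h0 (Or.inl hb)
  convert this using 1
  ring

lemma auxphi_deriv (s : ℝ) {y : ℝ} (hy : y < 1) :
    HasDerivAt (fun x => auxphi s x) (auxphi' s y) y := by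
  unfold auxphi auxphi'
  have h1 := aux_hasDerivAt_base s hy
  have h2 : HasDerivAt (fun x : ℝ => s * x) s y := by
    simpa using (hasDerivAt_id y).const_mul s
  refine ((h1.const_add (-1)).add h2).congr_deriv ?_
  ring

lemma auxphi'_deriv (s : ℝ) {y : ℝ} (hy : y < 1) :
    HasDerivAt (fun x => auxphi' s x) (auxphi'' s y) y := by
  unfold auxphi' auxphi''
  refine (((aux_hasDerivAt_base (s-1) hy).const_mul s).const_sub s).congr_deriv ?_
  rw [show s-1-1 = s-2 by ring]
  ring

lemma auxP_deriv (s : ℝ) {y : ℝ} (hy : y < 1) :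
    HasDerivAt (fun x => auxP s x) (auxP' s y) y := by
  unfold auxP auxP'
  have h1 := aux_hasDerivAt_base (s+1) hy
  have h2 : HasDerivAt (fun x : ℝ => (s+1) * x) (s+1) y := by
    simpa using (hasDerivAt_id y).const_mul (s+1)
  have h3 : HasDerivAt (fun x : ℝ => (s*(s+1)/2) * x^2) ((s*(s+1)/2) * (2*y)) y := by
    have := (hasDerivAt_pow 2 y).const_mul (s*(s+1)/2)
    refine this.congr_deriv ?_
    push_cast; ring
  refine (((h1.sub_const 1).add h2).sub h3).congr_deriv ?_
  rw [show s+1-1 = s by ring]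
  ring

lemma auxP'_deriv (s : ℝ) {y : ℝ} (hy : y < 1) :
    HasDerivAt (fun x => auxP' s x) (auxP'' s y) y := by
  unfold auxP' auxP''
  have h1 := (aux_hasDerivAt_base s hy).const_mul (s+1)
  have h2 : HasDerivAt (fun x : ℝ => s*(s+1) * x) (s*(s+1)) y := by
    simpa using (hasDerivAt_id y).const_mul (s*(s+1))
  refine (((hasDerivAt_const y (s+1)).sub h1).sub h2).congr_deriv ?_
  ring

lemma auxQ_deriv (s : ℝ) {y : ℝ} (hy : y < 1) :
    HasDerivAt (fun x => auxQ s x) (auxQ' s y) y := by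
  unfold auxQ auxQ'
  have h1 := aux_hasDerivAt_base (s+1) hy
  have h2 : HasDerivAt (fun x : ℝ => (s+1) * x) (s+1) y := by
    simpa using (hasDerivAt_id y).const_mul (s+1)
  refine ((h1.sub_const 1).add h2).congr_deriv ?_
  rw [show s+1-1 = s by ring]
  ring

lemma auxQ'_deriv (s : ℝ) {y : ℝ} (hy : y < 1) :
    HasDerivAt (fun x => auxQ' s x) (auxQ'' s y) y := by
  unfold auxQ' auxQ''
  refine ((hasDerivAt_const y (s+1)).sub ((aux_hasDerivAt_base s hy).const_mul (s+1))).congr_deriv ?_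
  ring

lemma auxW_deriv (s : ℝ) {y : ℝ} (hy0 : 0 < y) (hy1 : y < 1) :
    HasDerivAt (fun x => auxW s x)
      ((-1 + (1-y)^s + s*y) * y^(-(5:ℝ)/2)
        + ((1-2*s)*(2*s+1)/3) * (y^(-(1:ℝ)/2) * (1-y)^s)) y := by
  have hyne : y ≠ 0 := hy0.ne'
  have hr3 : HasDerivAt (fun x : ℝ => x^(-(3:ℝ)/2)) (-(3:ℝ)/2 * y^(-(3:ℝ)/2 - 1)) y :=
    Real.hasDerivAt_rpow_const (Or.inl hyne)
  have hr1 : HasDerivAt (fun x : ℝ => x^(-(1:ℝ)/2)) (-(1:ℝ)/2 * y^(-(1:ℝ)/2 - 1)) y :=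
    Real.hasDerivAt_rpow_const (Or.inl hyne)
  have hrh : HasDerivAt (fun x : ℝ => x^((1:ℝ)/2)) ((1:ℝ)/2 * y^((1:ℝ)/2 - 1)) y :=
    Real.hasDerivAt_rpow_const (Or.inl hyne)
  have t1 := (hr3.mul (auxP_deriv s hy1)).const_mul (-(2/3) : ℝ)
  have t2 := (hr1.mul (auxQ_deriv s hy1)).const_mul ((2*(1-2*s)/3) : ℝ)
  have t3 := hrh.const_mul ((2*(s*(1-s)/2 - (1-4*s^2)/3)) : ℝ)
  have hfull := (t1.sub t2).sub t3
  unfold auxW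
  refine hfull.congr_deriv ?_
  unfold auxP auxP' auxQ auxQ'
  have e2 : y^(-(3:ℝ)/2 - 1) = y^(-(5:ℝ)/2) := by norm_num
  have e1 : y^(-(3:ℝ)/2) = y^(-(5:ℝ)/2) * y := by
    rw [show -(3:ℝ)/2 = -(5:ℝ)/2 + 1 by norm_num, Real.rpow_add hy0, Real.rpow_one]
  have e4 : y^(-(1:ℝ)/2 - 1) = y^(-(5:ℝ)/2) * y := by
    rw [show -(1:ℝ)/2 - 1 = -(5:ℝ)/2 + 1 by norm_num, Real.rpow_add hy0, Real.rpow_one]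
  have e3 : y^(-(1:ℝ)/2) = y^(-(5:ℝ)/2) * y * y := by
    rw [show -(1:ℝ)/2 = (-(5:ℝ)/2 + 1) + 1 by norm_num, Real.rpow_add hy0,
      Real.rpow_add hy0, Real.rpow_one]
  have e5 : y^((1:ℝ)/2 - 1) = y^(-(5:ℝ)/2) * y * y := by
    rw [show (1:ℝ)/2 - 1 = (-(5:ℝ)/2 + 1) + 1 by norm_num, Real.rpow_add hy0,
      Real.rpow_add hy0, Real.rpow_one]
  have e6 : (1-y)^(s+1) = (1-y)^s * (1-y) := by
    rw [Real.rpow_add (by linarith : (0:ℝ) < 1 - y), Real.rpow_one]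
  rw [e2, e1, e4, e3, e5, e6]
  ring

lemma aux_integrableOn {s : ℝ} (hs : -1 < s) {h : ℝ → ℝ}
    (hcont : ContinuousOn h (Ioo 0 1))
    (hb1 : ∀ y ∈ Ioc (0:ℝ) (1/2), |h y| ≤ 16 * y ^ (-(1:ℝ)/2))
    (hb2 : ∀ y ∈ Ioo (1/2:ℝ) 1, |h y| ≤ 48 * (1-y) ^ s + 48) :
    IntegrableOn h (Ioo 0 1) := by
  have hL : IntegrableOn h (Ioc 0 (1/2)) := by
    have hg : IntegrableOn (fun y : ℝ => 16 * y ^ (-(1:ℝ)/2)) (Ioc 0 (1/2)) := by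
      have := (intervalIntegrable_rpow' (a := 0) (b := 1/2) (r := -(1:ℝ)/2) (by norm_num)).const_mul 16
      exact (intervalIntegrable_iff_integrableOn_Ioc_of_le (by norm_num)).mp this
    refine hg.integrable.mono' ?_ ?_
    · exact ((hcont.mono (fun y hy => ⟨hy.1, lt_of_le_of_lt hy.2 (by norm_num)⟩)).aestronglyMeasurable
        measurableSet_Ioc)
    · rw [ae_restrict_iff' measurableSet_Ioc]
      filter_upwards with y hy
      simpa using hb1 y hy
  have hR : IntegrableOn h (Ioo (1/2) 1) := by
    have hg : IntegrableOn (fun y : ℝ => 48 * (1-y) ^ s + 48) (Ioo (1/2) 1) := by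
      have h1 : IntervalIntegrable (fun y : ℝ => (1-y) ^ s) volume (1/2) 1 := by
        have := (intervalIntegrable_rpow' (a := 0) (b := 1/2) (r := s) hs).comp_sub_left 1
        norm_num at this; exact this.symm
      have := (h1.const_mul 48).add (_root_.intervalIntegrable_const (c := (48:ℝ)))
      exact ((intervalIntegrable_iff_integrableOn_Ioc_of_le (by norm_num)).mp this).mono_set
        Ioo_subset_Ioc_self
    refine hg.integrable.mono' ?_ ?_
    · exact ((hcont.mono (fun y hy => ⟨lt_of_lt_of_le (by norm_num) hy.1.le, hy.2⟩)).aestronglyMeasurable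
        measurableSet_Ioo)
    · rw [ae_restrict_iff' measurableSet_Ioo]
      filter_upwards with y hy
      simpa using hb2 y hy
  refine (hL.union hR).mono_set (fun y hy => ?_)
  by_cases hc : y ≤ 1/2
  · exact Or.inl ⟨hy.1, hc⟩
  · exact Or.inr ⟨lt_of_not_ge hc, hy.2⟩

lemma aux_beta {s : ℝ} (hs : -1 < s) :
    ∫ y in Ioo (0:ℝ) 1, y ^ (-(1:ℝ)/2) * (1-y) ^ s
      = Real.Gamma (1/2) * Real.Gamma (s+1) / Real.Gamma (s+3/2) := by
  have hv : (0:ℝ) < s + 1 := by linarith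
  have key := Complex.Gamma_mul_Gamma_eq_betaIntegral
    (s := (1/2 : ℂ)) (t := ((s:ℂ) + 1)) (by norm_num)
    (by simpa using hv)
  have hbeta : Complex.betaIntegral (1/2) ((s:ℂ)+1)
      = ((∫ y in (0:ℝ)..1, y ^ (-(1:ℝ)/2) * (1-y) ^ s : ℝ) : ℂ) := by
    rw [Complex.betaIntegral, ← intervalIntegral.integral_ofReal]
    refine intervalIntegral.integral_congr (fun x hx => ?_)
    rw [uIcc_of_le (by norm_num)] at hx
    obtain ⟨hx0, hx1⟩ := hx
    rw [Complex.ofReal_mul, Complex.ofReal_cpow hx0, Complex.ofReal_cpow (by linarith)]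
    push_cast
    norm_num
  rw [hbeta] at key
  have c1 : ((1:ℂ)/2) = ((1/2 : ℝ) : ℂ) := by norm_num
  have c2 : ((s:ℂ) + 1) = (((s + 1 : ℝ)) : ℂ) := by push_cast; ring
  have c3 : (((1/2:ℝ):ℂ) + (((s+1:ℝ)):ℂ)) = (((s + 3/2 : ℝ)) : ℂ) := by push_cast; ring
  rw [c1, c2, c3, Complex.Gamma_ofReal, Complex.Gamma_ofReal, Complex.Gamma_ofReal] at key
  have key2 : Real.Gamma (1/2) * Real.Gamma (s+1)
      = Real.Gamma (s+3/2) * ∫ y in (0:ℝ)..1, y ^ (-(1:ℝ)/2) * (1-y) ^ s := by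
    exact_mod_cast key
  have hΓ : Real.Gamma (s+3/2) ≠ 0 := (Real.Gamma_pos_of_pos (by linarith)).ne'
  rw [intervalIntegral.integral_of_le (by norm_num : (0:ℝ) ≤ 1),
    MeasureTheory.integral_Ioc_eq_integral_Ioo] at key2
  rw [eq_div_iff hΓ]
  linarith [key2]

lemma aux_tendsto_rpow_zero {p : ℝ} (hp : 0 < p) :
    Tendsto (fun y : ℝ => y ^ p) (nhdsWithin 0 (Ioi 0)) (nhds 0) := by
  have h := (Real.continuousAt_rpow_const 0 p (Or.inr hp.le)).tendsto
  rw [Real.zero_rpow hp.ne'] at h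
  exact h.mono_left nhdsWithin_le_nhds

lemma aux_rpow_le8 {b z : ℝ} (hb : 1/2 ≤ b) (hz : z ≤ 0) (hz3 : -z ≤ 3) : b ^ z ≤ 8 := by
  have h1 : b ^ z ≤ ((1:ℝ)/2) ^ z :=
    Real.rpow_le_rpow_of_nonpos (by norm_num) hb hz
  have h2 : ((1:ℝ)/2) ^ z = 2 ^ (-z) := by
    rw [show (1:ℝ)/2 = 2⁻¹ by norm_num, Real.inv_rpow (by norm_num : (0:ℝ) ≤ 2),
      ← Real.rpow_neg (by norm_num : (0:ℝ) ≤ 2)]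
  have h3 : (2:ℝ) ^ (-z) ≤ 2 ^ (3:ℝ) :=
    Real.rpow_le_rpow_of_exponent_le one_le_two hz3
  have h4 : (2:ℝ) ^ (3:ℝ) = 8 := by
    rw [show (3:ℝ) = ((3:ℕ):ℝ) by norm_num, Real.rpow_natCast]; norm_num
  linarith [h1, h2 ▸ h1, h3, h4 ▸ h3]

-- paste defs from t4 assumed present; for this test re-import

lemma aux_quadP {s : ℝ} (hs1 : -1 < s) (hs0 : s < 0) :
    ∀ y ∈ Ioc (0:ℝ) (1/2), |auxP s y| ≤ 16 * y^2 := by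
  apply aux_quad_bound (f' := auxP' s) (f'' := auxP'' s)
  · exact fun x hx => auxP_deriv s (lt_of_le_of_lt hx.2 (by norm_num))
  · exact fun x hx => auxP'_deriv s (lt_of_le_of_lt hx.2 (by norm_num))
  · intro x hx
    have hA0 : 0 ≤ (1-x)^(s-1) := Real.rpow_nonneg (by linarith [hx.2]) _
    have hA8 : (1-x)^(s-1) ≤ 8 :=
      aux_rpow_le8 (by linarith [hx.2]) (by linarith) (by linarith)
    unfold auxP''
    have hc0 : s*(s+1) ≤ 0 := by nlinarith
    have hcl : -1/4 ≤ s*(s+1) := by nlinarith [sq_nonneg (s+1/2)]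
    have h1 := mul_le_mul_of_nonpos_left hA8 hc0
    have h2 := mul_le_mul_of_nonpos_left hA0 hc0
    rw [abs_le]
    constructor <;> nlinarith [h1, h2]
  · unfold auxP; norm_num
  · unfold auxP'; norm_num [Real.one_rpow]
lemma aux_quadQ {s : ℝ} (hs1 : -1 < s) (hs0 : s < 0) :
    ∀ y ∈ Ioc (0:ℝ) (1/2), |auxQ s y| ≤ 16 * y^2 := by
  apply aux_quad_bound (f' := auxQ' s) (f'' := auxQ'' s)
  · exact fun x hx => auxQ_deriv s (lt_of_le_of_lt hx.2 (by norm_num))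
  · exact fun x hx => auxQ'_deriv s (lt_of_le_of_lt hx.2 (by norm_num))
  · intro x hx
    have hA0 : 0 ≤ (1-x)^(s-1) := Real.rpow_nonneg (by linarith [hx.2]) _
    have hA8 : (1-x)^(s-1) ≤ 8 :=
      aux_rpow_le8 (by linarith [hx.2]) (by linarith) (by linarith)
    unfold auxQ''
    have hc0 : s*(s+1) ≤ 0 := by nlinarith
    have hcl : -1/4 ≤ s*(s+1) := by nlinarith [sq_nonneg (s+1/2)]
    have h1 := mul_le_mul_of_nonpos_left hA8 hc0
    have h2 := mul_le_mul_of_nonpos_left hA0 hc0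
    rw [abs_le]
    constructor <;> nlinarith [h1, h2]
  · unfold auxQ; norm_num
  · unfold auxQ'; norm_num [Real.one_rpow]
lemma aux_quadphi {s : ℝ} (hs1 : -1 < s) (hs0 : s < 0) :
    ∀ y ∈ Ioc (0:ℝ) (1/2), |auxphi s y| ≤ 16 * y^2 := by
  apply aux_quad_bound (f' := auxphi' s) (f'' := auxphi'' s)
  · exact fun x hx => auxphi_deriv s (lt_of_le_of_lt hx.2 (by norm_num))
  · exact fun x hx => auxphi'_deriv s (lt_of_le_of_lt hx.2 (by norm_num))
  · intro x hx
    have hA0 : 0 ≤ (1-x)^(s-2) := Real.rpow_nonneg (by linarith [hx.2]) _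
    have hA8 : (1-x)^(s-2) ≤ 8 :=
      aux_rpow_le8 (by linarith [hx.2]) (by linarith) (by linarith)
    unfold auxphi''
    have hc0 : 0 ≤ s*(s-1) := by nlinarith
    have hcu : s*(s-1) ≤ 2 := by nlinarith
    have h1 : s*(s-1)*(1-x)^(s-2) ≤ 2*8 :=
      mul_le_mul hcu hA8 hA0 (by norm_num)
    have h2 : 0 ≤ s*(s-1)*(1-x)^(s-2) := mul_nonneg hc0 hA0
    rw [abs_le]
    constructor <;> nlinarith [h1, h2]
  · unfold auxphi; norm_num [Real.one_rpow]
  · unfold auxphi'; norm_num [Real.one_rpow]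

lemma aux_W_tendsto_zero {s : ℝ} (hs1 : -1 < s) (hs0 : s < 0) :
    Tendsto (auxW s) (nhdsWithin 0 (Ioi 0)) (nhds 0) := by
  have hmem : Ioc (0:ℝ) (1/2) ∈ nhdsWithin (0:ℝ) (Ioi 0) :=
    Ioc_mem_nhdsGT_of_mem ⟨le_refl 0, by norm_num⟩
  have t1 : Tendsto (fun y : ℝ => y^(-(3:ℝ)/2) * auxP s y) (nhdsWithin 0 (Ioi 0)) (nhds 0) := by
    apply squeeze_zero_norm'
    · filter_upwards [hmem] with y hy
      have hy0 : (0:ℝ) < y := hy.1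
      have hk : y^(-(3:ℝ)/2) * y^2 = y^((1:ℝ)/2) := by
        rw [← Real.rpow_natCast y 2, ← Real.rpow_add hy0]; norm_num
      calc ‖y^(-(3:ℝ)/2) * auxP s y‖
          = y^(-(3:ℝ)/2) * |auxP s y| := by
            rw [norm_mul, Real.norm_eq_abs, Real.norm_eq_abs,
              abs_of_nonneg (Real.rpow_nonneg hy0.le _)]
        _ ≤ y^(-(3:ℝ)/2) * (16 * y^2) :=
            mul_le_mul_of_nonneg_left (aux_quadP hs1 hs0 y hy) (Real.rpow_nonneg hy0.le _)
        _ = 16 * y^((1:ℝ)/2) := by rw [← hk]; ring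
    · simpa using (aux_tendsto_rpow_zero (by norm_num : (0:ℝ) < 1/2)).const_mul (16:ℝ)
  have t2 : Tendsto (fun y : ℝ => y^(-(1:ℝ)/2) * auxQ s y) (nhdsWithin 0 (Ioi 0)) (nhds 0) := by
    apply squeeze_zero_norm'
    · filter_upwards [hmem] with y hy
      have hy0 : (0:ℝ) < y := hy.1
      have hk : y^(-(1:ℝ)/2) * y^2 = y^((3:ℝ)/2) := by
        rw [← Real.rpow_natCast y 2, ← Real.rpow_add hy0]; norm_num
      calc ‖y^(-(1:ℝ)/2) * auxQ s y‖
          = y^(-(1:ℝ)/2) * |auxQ s y| := by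
            rw [norm_mul, Real.norm_eq_abs, Real.norm_eq_abs,
              abs_of_nonneg (Real.rpow_nonneg hy0.le _)]
        _ ≤ y^(-(1:ℝ)/2) * (16 * y^2) :=
            mul_le_mul_of_nonneg_left (aux_quadQ hs1 hs0 y hy) (Real.rpow_nonneg hy0.le _)
        _ = 16 * y^((3:ℝ)/2) := by rw [← hk]; ring
    · simpa using (aux_tendsto_rpow_zero (by norm_num : (0:ℝ) < 3/2)).const_mul (16:ℝ)
  have t3 : Tendsto (fun y : ℝ => y^((1:ℝ)/2)) (nhdsWithin 0 (Ioi 0)) (nhds 0) :=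
    aux_tendsto_rpow_zero (by norm_num)
  have H := ((t1.const_mul (-(2/3) : ℝ)).sub (t2.const_mul ((2*(1-2*s)/3) : ℝ))).sub
    (t3.const_mul ((2*(s*(1-s)/2 - (1-4*s^2)/3)) : ℝ))
  have hWeq : auxW s = fun y => -(2/3) * (y^(-(3:ℝ)/2) * auxP s y)
      - (2*(1-2*s)/3) * (y^(-(1:ℝ)/2) * auxQ s y)
      - (2*(s*(1-s)/2 - (1-4*s^2)/3)) * y^((1:ℝ)/2) := by
    funext y; unfold auxW; ring
  rw [hWeq]
  simpa using H

lemma aux_W_tendsto_one {s : ℝ} (hs1 : -1 < s) :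
    Tendsto (auxW s) (nhdsWithin 1 (Iio 1)) (nhds (auxW s 1)) := by
  have hp : (0:ℝ) < s + 1 := by linarith
  have hbase : ContinuousAt (fun x : ℝ => (1-x)^(s+1)) 1 := by
    have h0 : ContinuousAt (fun t : ℝ => t^(s+1)) ((1:ℝ) - 1) := by
      rw [sub_self]
      exact Real.continuousAt_rpow_const 0 _ (Or.inr hp.le)
    exact h0.comp ((continuous_const.sub continuous_id).continuousAt)
  have hPc : ContinuousAt (auxP s) 1 := by
    have : auxP s = fun y => (1-y)^(s+1) + (-1 + (s+1)*y - (s*(s+1)/2)*y^2) := by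
      funext y; unfold auxP; ring
    rw [this]
    exact hbase.add (by fun_prop)
  have hQc : ContinuousAt (auxQ s) 1 := by
    have : auxQ s = fun y => (1-y)^(s+1) + (-1 + (s+1)*y) := by
      funext y; unfold auxQ; ring
    rw [this]
    exact hbase.add (by fun_prop)
  have hc3 : ContinuousAt (fun x : ℝ => x^(-(3:ℝ)/2)) 1 :=
    Real.continuousAt_rpow_const 1 _ (Or.inl one_ne_zero)
  have hc1 : ContinuousAt (fun x : ℝ => x^(-(1:ℝ)/2)) 1 :=
    Real.continuousAt_rpow_const 1 _ (Or.inl one_ne_zero)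
  have hch : ContinuousAt (fun x : ℝ => x^((1:ℝ)/2)) 1 :=
    Real.continuousAt_rpow_const 1 _ (Or.inl one_ne_zero)
  have : ContinuousAt (auxW s) 1 := by
    unfold auxW
    exact ((continuousAt_const.mul (hc3.mul hPc)).sub
      (continuousAt_const.mul (hc1.mul hQc))).sub (continuousAt_const.mul hch)
  exact this.tendsto.mono_left nhdsWithin_le_nhds

lemma aux_cont_base {p y : ℝ} (hy : y < 1) : ContinuousAt (fun x : ℝ => (1-x)^p) y := by
  have h0 : ContinuousAt (fun t : ℝ => t^p) ((1:ℝ) - y) :=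
    Real.continuousAt_rpow_const _ _ (Or.inl (by linarith))
  exact h0.comp ((continuous_const.sub continuous_id).continuousAt)

lemma aux_main {s : ℝ} (hs1 : -1 < s) (hs0 : s < 0) :
    ∫ y in Ioo (0:ℝ) 1, (-1 + (1-y)^s + s*y) * y^(-(5:ℝ)/2)
      = 2/3 - 2*s - ((1-4*s^2)/3) *
        (Real.Gamma (1/2) * Real.Gamma (s+1) / Real.Gamma (s+3/2)) := by
  have habs : |s| ≤ 1 := by rw [abs_le]; constructor <;> linarith
  have hintf : IntegrableOn (fun y : ℝ => (-1 + (1-y)^s + s*y) * y^(-(5:ℝ)/2)) (Ioo 0 1) := by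
    apply aux_integrableOn hs1
    · intro y hy
      exact (((continuousAt_const.add (aux_cont_base hy.2)).add
        (continuousAt_const.mul continuousAt_id)).mul
        (Real.continuousAt_rpow_const _ _ (Or.inl hy.1.ne'))).continuousWithinAt
    · intro y hy
      have hy0 : (0:ℝ) < y := hy.1
      have hφ : |(-1 + (1-y)^s + s*y)| ≤ 16 * y^2 := aux_quadphi hs1 hs0 y hy
      have h52 : y^2 * y^(-(5:ℝ)/2) = y^(-(1:ℝ)/2) := by
        rw [← Real.rpow_natCast y 2, ← Real.rpow_add hy0]; norm_num
      calc |(-1 + (1-y)^s + s*y) * y^(-(5:ℝ)/2)|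
          = |(-1 + (1-y)^s + s*y)| * y^(-(5:ℝ)/2) := by
            rw [abs_mul, abs_of_nonneg (Real.rpow_nonneg hy0.le _)]
        _ ≤ (16 * y^2) * y^(-(5:ℝ)/2) :=
            mul_le_mul_of_nonneg_right hφ (Real.rpow_nonneg hy0.le _)
        _ = 16 * y^(-(1:ℝ)/2) := by rw [mul_assoc, h52]
    · intro y hy
      have hA0 : 0 ≤ (1-y)^s := Real.rpow_nonneg (by linarith [hy.2]) _
      have h8 : y^(-(5:ℝ)/2) ≤ 8 := aux_rpow_le8 hy.1.le (by norm_num) (by norm_num)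
      have hφ : |(-1 + (1-y)^s + s*y)| ≤ (1-y)^s + 2 := by
        rw [abs_le]
        constructor <;> nlinarith [hy.1, hy.2, abs_le.mp habs]
      calc |(-1 + (1-y)^s + s*y) * y^(-(5:ℝ)/2)|
          = |(-1 + (1-y)^s + s*y)| * y^(-(5:ℝ)/2) := by
            rw [abs_mul, abs_of_nonneg (Real.rpow_nonneg (by linarith [hy.1] : (0:ℝ) ≤ y) _)]
        _ ≤ ((1-y)^s + 2) * 8 :=
            mul_le_mul hφ h8 (Real.rpow_nonneg (by linarith [hy.1]) _) (by linarith)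
        _ ≤ 48 * (1-y)^s + 48 := by linarith
  have hintb : IntegrableOn (fun y : ℝ => y^(-(1:ℝ)/2) * (1-y)^s) (Ioo 0 1) := by
    apply aux_integrableOn hs1
    · intro y hy
      exact ((Real.continuousAt_rpow_const _ _ (Or.inl hy.1.ne')).mul
        (aux_cont_base hy.2)).continuousWithinAt
    · intro y hy
      have hy0 : (0:ℝ) < y := hy.1
      have hA8 : (1-y)^s ≤ 8 := aux_rpow_le8 (by linarith [hy.2]) hs0.le (by linarith)
      have hB0 : 0 ≤ y^(-(1:ℝ)/2) := Real.rpow_nonneg hy0.le _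
      have hA0 : 0 ≤ (1-y)^s := Real.rpow_nonneg (by linarith [hy.2, hy.1] : (0:ℝ) ≤ 1 - y) _
      rw [abs_of_nonneg (mul_nonneg hB0 hA0)]
      nlinarith [mul_le_mul_of_nonneg_left hA8 hB0]
    · intro y hy
      have hB8 : y^(-(1:ℝ)/2) ≤ 8 := aux_rpow_le8 hy.1.le (by norm_num) (by norm_num)
      have hA0 : 0 ≤ (1-y)^s := Real.rpow_nonneg (by linarith [hy.2]) _
      have hB0 : 0 ≤ y^(-(1:ℝ)/2) := Real.rpow_nonneg (by linarith [hy.1] : (0:ℝ) ≤ y) _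
      rw [abs_of_nonneg (mul_nonneg hB0 hA0)]
      nlinarith [mul_le_mul_of_nonneg_right hB8 hA0]
  have hintg : IntegrableOn (fun y : ℝ => (-1 + (1-y)^s + s*y) * y^(-(5:ℝ)/2)
      + ((1-2*s)*(2*s+1)/3) * (y^(-(1:ℝ)/2) * (1-y)^s)) (Ioo 0 1) :=
    hintf.add (hintb.const_mul _)
  have hint : IntervalIntegrable (fun y : ℝ => (-1 + (1-y)^s + s*y) * y^(-(5:ℝ)/2)
      + ((1-2*s)*(2*s+1)/3) * (y^(-(1:ℝ)/2) * (1-y)^s)) volume 0 1 := by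
    rw [intervalIntegrable_iff_integrableOn_Ioc_of_le (by norm_num),
      integrableOn_Ioc_iff_integrableOn_Ioo]
    exact hintg
  have hFTC := intervalIntegral.integral_eq_sub_of_hasDerivAt_of_tendsto
    (by norm_num : (0:ℝ) < 1)
    (fun y hy => auxW_deriv s hy.1 hy.2) hint
    (aux_W_tendsto_zero hs1 hs0) (aux_W_tendsto_one hs1)
  have h1 : ∫ y in Ioo (0:ℝ) 1, ((-1 + (1-y)^s + s*y) * y^(-(5:ℝ)/2)
      + ((1-2*s)*(2*s+1)/3) * (y^(-(1:ℝ)/2) * (1-y)^s)) = auxW s 1 := by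
    rw [← MeasureTheory.integral_Ioc_eq_integral_Ioo,
      ← intervalIntegral.integral_of_le (by norm_num : (0:ℝ) ≤ 1), hFTC, sub_zero]
  have h2 : ∫ y in Ioo (0:ℝ) 1, ((-1 + (1-y)^s + s*y) * y^(-(5:ℝ)/2)
      + ((1-2*s)*(2*s+1)/3) * (y^(-(1:ℝ)/2) * (1-y)^s))
      = (∫ y in Ioo (0:ℝ) 1, (-1 + (1-y)^s + s*y) * y^(-(5:ℝ)/2))
        + ((1-2*s)*(2*s+1)/3) * ∫ y in Ioo (0:ℝ) 1, y^(-(1:ℝ)/2) * (1-y)^s := by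
    rw [MeasureTheory.integral_add hintf (hintb.const_mul _),
      MeasureTheory.integral_const_mul]
  have hW1 : auxW s 1 = 2/3 - 2*s := by
    unfold auxW auxP auxQ
    norm_num [Real.one_rpow, Real.zero_rpow (show s+1 ≠ 0 by linarith)]
    ring
  rw [aux_beta hs1] at h2
  rw [h2, hW1] at h1
  linear_combination h1


/-- For `F ∈ (1, 5/4)`,
`∫_0^1 (−1 + (1−y)^{4−4F} + (4−4F)y) y^{−5/2} dy = −22/3 + 8F + 4√π Γ(5−4F)/(3Γ(7/2−4F))`. -/
theorem stmt_17 (F : ℝ) (hF : F ∈ Set.Ioo (1 : ℝ) (5/4)) :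
    ∫ y in Set.Ioo (0:ℝ) 1,
        (-1 + (1 - y) ^ (4 - 4*F) + (4 - 4*F) * y) * y ^ (-(5:ℝ)/2)
      = -22/3 + 8*F +
          (4 * Real.sqrt Real.pi * Real.Gamma (5 - 4*F)) / (3 * Real.Gamma (7/2 - 4*F)) := by
  obtain ⟨hF1, hF2⟩ := hF
  have hs1 : -1 < 4 - 4*F := by linarith
  have hs0 : 4 - 4*F < 0 := by linarith
  have h := aux_main hs1 hs0
  rw [h, Real.Gamma_one_half_eq, show (4 - 4*F) + 1 = 5 - 4*F by ring]
  by_cases hc : F = 9/8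
  · subst hc
    have h0 : Real.Gamma (7/2 - 4*(9/8:ℝ)) = 0 := by
      rw [show (7:ℝ)/2 - 4*(9/8) = -((1:ℕ):ℝ) by norm_num]
      exact Real.Gamma_neg_nat_eq_zero 1
    rw [h0]
    norm_num
  · have hA' : (7:ℝ)/2 - 4*F ≠ 0 := by intro h'; linarith
    have hB' : (7:ℝ)/2 - 4*F + 1 ≠ 0 := by intro h'; apply hc; linarith
    have hG : Real.Gamma (7/2 - 4*F) ≠ 0 := by
      apply Real.Gamma_ne_zero
      intro m
      match m with
      | 0 => simpa using hA'
      | 1 => intro h'; apply hc; push_cast at h'; linarith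
      | (n+2) =>
        intro h'
        push_cast at h'
        have : (0:ℝ) ≤ (n:ℝ) := Nat.cast_nonneg n
        linarith
    rw [show (4 - 4*F) + 3/2 = ((7/2 - 4*F) + 1) + 1 by ring,
      Real.Gamma_add_one hB', Real.Gamma_add_one hA']
    have hDne : ((7:ℝ)/2 - 4*F + 1) * (7/2 - 4*F) ≠ 0 := mul_ne_zero hB' hA'
    have e : (1 - 4*(4 - 4*F)^2)/3 * (Real.sqrt Real.pi * Real.Gamma (5 - 4*F) /
          ((7/2 - 4*F + 1) * ((7/2 - 4*F) * Real.Gamma (7/2 - 4*F))))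
        = (((7/2 - 4*F + 1) * (7/2 - 4*F)) * (-4 * (Real.sqrt Real.pi * Real.Gamma (5 - 4*F)))) /
          (((7/2 - 4*F + 1) * (7/2 - 4*F)) * (3 * Real.Gamma (7/2 - 4*F))) := by
      rw [div_mul_div_comm]
      congr 1 <;> ring
    rw [e, mul_div_mul_left _ _ hDne]
    ring
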